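/- For every integer d ≥ 1 there exists a constant C_0 such that for every constant C ≥ C_0 the following holds with r = (C/n)^{1/d}: letting X_1,…,X_n be independent uniform random points in [0,1]^d, asymptotically almost surely the number of cells of the side-s tessellation of [0,1]^d that are sparse with respect to {X_1,…,X_n} is at most e^{−K/2}·n. -/

import Mathlib

open MeasureTheory Filter

/-- The uniform probability measure on `n` independent points in `[0,1]^d`. -/
noncomputable def unifCube (d n : ℕ) :
    Measure (Fin n → EuclideanSpace ℝ (Fin d)) :=
  (volume : Measure (Fin n → EuclideanSpace ℝ (Fin d))).restrict
    {x | ∀ i, ∀ k, x i k ∈ Set.Icc (0 : ℝ) 1}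

/-- The half-open cell of the side-`1/m` tessellation of `[0,1]^d` indexed by `v`. -/
def cell (d m : ℕ) (v : Fin d → Fin m) : Set (EuclideanSpace ℝ (Fin d)) :=
  {x | ∀ k : Fin d, (v k : ℝ) / m ≤ x k ∧ x k < ((v k : ℝ) + 1) / m}

/-- A cell is sparse with respect to the points `x` if it contains at most `R = 2·3^d`
of them. -/
def IsSparse (d m n : ℕ) (x : Fin n → EuclideanSpace ℝ (Fin d))
    (v : Fin d → Fin m) : Prop :=
  {i : Fin n | x i ∈ cell d m v}.ncard ≤ 2 * 3 ^ d

/-- The number of sparse cells with respect to the points `x`. -/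
noncomputable def sparseCount (d m n : ℕ)
    (x : Fin n → EuclideanSpace ℝ (Fin d)) : ℕ :=
  {v : Fin d → Fin m | IsSparse d m n x v}.ncard


namespace Aas
open Finset
variable {d : ℕ}

variable {d : ℕ}

def cube (d : ℕ) : Set (EuclideanSpace ℝ (Fin d)) := {y | ∀ k, y k ∈ Set.Icc (0:ℝ) 1}

lemma measurableSet_es_pi (s : Fin d → Set ℝ) (hs : ∀ k, MeasurableSet (s k)) :
    MeasurableSet {y : EuclideanSpace ℝ (Fin d) | ∀ k, y k ∈ s k} := by
  have : {y : EuclideanSpace ℝ (Fin d) | ∀ k, y k ∈ s k}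
      = ⋂ k, (fun y : EuclideanSpace ℝ (Fin d) => y k) ⁻¹' (s k) := by
    ext y; simp
  rw [this]
  exact MeasurableSet.iInter fun k => ((measurable_pi_apply k).comp (WithLp.measurable_ofLp 2 _)) (hs k)

lemma volume_es_pi (s : Fin d → Set ℝ) (hs : ∀ k, MeasurableSet (s k)) :
    volume {y : EuclideanSpace ℝ (Fin d) | ∀ k, y k ∈ s k} = ∏ k, volume (s k) := by
  have h : {y : EuclideanSpace ℝ (Fin d) | ∀ k, y k ∈ s k}
      = (WithLp.ofLp : EuclideanSpace ℝ (Fin d) → (Fin d → ℝ)) ⁻¹' (Set.pi Set.univ s) := by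
    ext y; simp [Set.mem_pi]
  rw [h, (PiLp.volume_preserving_ofLp (Fin d)).measure_preimage
    (MeasurableSet.univ_pi hs).nullMeasurableSet, volume_pi_pi]

lemma measurableSet_cube : MeasurableSet (cube d) :=
  measurableSet_es_pi _ (fun _ => measurableSet_Icc)

lemma volume_cube : volume (cube d) = 1 := by
  rw [cube, volume_es_pi _ (fun _ => measurableSet_Icc)]
  simp [Real.volume_Icc]

lemma unifCube_eq (d n : ℕ) :
    unifCube d n = volume.restrict (Set.pi Set.univ (fun _ : Fin n => cube d)) := by
  unfold unifCube
  congr 1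
  ext x
  simp [cube, Set.mem_pi]

lemma unifCube_pi (n : ℕ) (B : Fin n → Set (EuclideanSpace ℝ (Fin d)))
    (hB : ∀ i, MeasurableSet (B i)) :
    unifCube d n (Set.pi Set.univ B) = ∏ i, volume (B i ∩ cube d) := by
  rw [unifCube_eq, Measure.restrict_apply (MeasurableSet.univ_pi hB),
    ← Set.pi_inter_distrib]
  exact volume_pi_pi _

lemma unifCube_univ (d n : ℕ) : unifCube d n Set.univ = 1 := by
  have : (Set.univ : Set (Fin n → EuclideanSpace ℝ (Fin d)))
      = Set.pi Set.univ (fun _ => Set.univ) := by simp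
  rw [this, unifCube_pi _ _ (fun _ => MeasurableSet.univ)]
  simp [volume_cube (d := d)]



variable {d : ℕ}

lemma cell_eq (m : ℕ) (v : Fin d → Fin m) :
    cell d m v = {x : EuclideanSpace ℝ (Fin d) |
      ∀ k, x k ∈ Set.Ico ((v k : ℝ) / m) (((v k : ℝ) + 1) / m)} := by
  ext x; simp [cell, Set.mem_Ico]

lemma measurableSet_cell (m : ℕ) (v : Fin d → Fin m) : MeasurableSet (cell d m v) := by
  rw [cell_eq]
  exact measurableSet_es_pi _ (fun _ => measurableSet_Ico)

lemma volume_cell (m : ℕ) (hd : d ≠ 0) (v : Fin d → Fin m) :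
    volume (cell d m v) = ENNReal.ofReal (1 / (m:ℝ)^d) := by
  have hm : (0:ℝ) < m := by
    have := (v ⟨0, Nat.pos_of_ne_zero hd⟩).pos
    exact_mod_cast this
  rw [cell_eq, volume_es_pi _ (fun _ => measurableSet_Ico)]
  have : ∀ k : Fin d, volume (Set.Ico ((v k : ℝ) / m) (((v k : ℝ) + 1) / m))
      = ENNReal.ofReal (1 / (m:ℝ)) := by
    intro k
    rw [Real.volume_Ico]
    congr 1
    field_simp
    ring
  simp only [this, prod_const, card_univ, Fintype.card_fin]
  rw [← ENNReal.ofReal_pow (by positivity)]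
  congr 1
  rw [div_pow, one_pow]

lemma cell_subset_cube (m : ℕ) (v : Fin d → Fin m) : cell d m v ⊆ cube d := by
  intro x hx k
  have h := hx k
  have hm : (0:ℝ) < m := by exact_mod_cast (v k).pos
  have h0 : (0:ℝ) ≤ (v k : ℝ) / m := by positivity
  have h1 : ((v k : ℝ) + 1) / m ≤ 1 := by
    rw [div_le_one hm]
    have := (v k).2
    exact_mod_cast Nat.succ_le_of_lt this
  exact ⟨le_trans h0 h.1, le_of_lt (lt_of_lt_of_le h.2 h1)⟩

lemma cell_disjoint (m : ℕ) {u v : Fin d → Fin m} (huv : u ≠ v) :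
    Disjoint (cell d m u) (cell d m v) := by
  rw [Set.disjoint_left]
  intro x hu hv
  obtain ⟨k, hk⟩ : ∃ k, u k ≠ v k := Function.ne_iff.mp huv
  have hm : (0:ℝ) < m := by exact_mod_cast (u k).pos
  have key : ∀ a b : Fin m, (a:ℕ) < (b:ℕ) →
      ((a:ℝ) / m ≤ x k ∧ x k < ((a:ℝ) + 1) / m) →
      ((b:ℝ) / m ≤ x k ∧ x k < ((b:ℝ) + 1) / m) → False := by
    intro a b hab ha hb
    have h1 : ((a:ℝ) + 1) ≤ (b:ℝ) := by exact_mod_cast hab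
    have h2 : ((a:ℝ) + 1) / m ≤ (b:ℝ) / m := by gcongr
    exact absurd (lt_of_lt_of_le ha.2 (h2.trans hb.1)) (lt_irrefl _)
  rcases Nat.lt_or_ge (u k : ℕ) (v k : ℕ) with h | h
  · exact key _ _ h ⟨(hu k).1, (hu k).2⟩ ⟨(hv k).1, (hv k).2⟩
  · rcases Nat.lt_or_ge (v k : ℕ) (u k : ℕ) with h' | h'
    · exact key _ _ h' ⟨(hv k).1, (hv k).2⟩ ⟨(hu k).1, (hu k).2⟩
    · exact hk (Fin.ext (le_antisymm h' h))


variable {d : ℕ}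

lemma prob_count_le (n a : ℕ) (A : Set (EuclideanSpace ℝ (Fin d)))
    (hA : MeasurableSet A) (hsub : A ⊆ cube d)
    (p : ℝ) (hp0 : 0 ≤ p) (hvol : volume A = ENNReal.ofReal p) :
    unifCube d n {x | {i | x i ∈ A}.ncard ≤ a}
      ≤ ENNReal.ofReal (∑ j ∈ range (a+1), (n.choose j : ℝ) * p^j * (1-p)^(n-j)) := by
  classical
  by_cases hp1 : p ≤ 1
  case neg =>
    exfalso
    have h1 : volume A ≤ 1 := volume_cube (d := d) ▸ measure_mono hsub
    rw [hvol] at h1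
    have := ENNReal.ofReal_le_one.mp h1
    exact hp1 this
  have hq0 : 0 ≤ 1 - p := by linarith
  have hvolc : volume (cube d \ A) = ENNReal.ofReal (1 - p) := by
    rw [measure_diff hsub hA.nullMeasurableSet (by rw [hvol]; exact ENNReal.ofReal_ne_top),
      hvol, volume_cube, ENNReal.ofReal_sub _ hp0, ENNReal.ofReal_one]
  -- the elementary events
  set E : Finset (Fin n) → Set (Fin n → EuclideanSpace ℝ (Fin d)) :=
    fun T => Set.pi Set.univ (fun i => if i ∈ T then A else Aᶜ) with hE
  have hsubE : {x : Fin n → EuclideanSpace ℝ (Fin d) | {i | x i ∈ A}.ncard ≤ a}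
      ⊆ ⋃ j ∈ range (a+1), ⋃ T ∈ powersetCard j (univ : Finset (Fin n)), E T := by
    intro x hx
    set T : Finset (Fin n) := univ.filter (fun i => x i ∈ A) with hT
    have hcard : {i | x i ∈ A}.ncard = T.card := by
      rw [← Set.ncard_coe_finset]
      congr 1
      ext i; simp [hT]
    have hTa : T.card ≤ a := by rw [← hcard]; exact hx
    refine Set.mem_biUnion (mem_range.mpr (Nat.lt_succ_of_le hTa)) ?_
    refine Set.mem_biUnion (mem_powersetCard_univ.mpr rfl) ?_
    intro i _
    by_cases hi : x i ∈ A <;> simp [hT, hi]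
  have hmeasE : ∀ T : Finset (Fin n), unifCube d n (E T)
      = ENNReal.ofReal p ^ T.card * ENNReal.ofReal (1-p) ^ (n - T.card) := by
    intro T
    rw [hE, unifCube_pi _ _ (fun i => by by_cases hi : i ∈ T <;> simp [hi, hA, hA.compl])]
    have hval : ∀ i : Fin n, (if i ∈ T then A else Aᶜ) ∩ cube d
        = if i ∈ T then A else (cube d \ A) := by
      intro i
      by_cases hi : i ∈ T
      · rw [if_pos hi, if_pos hi, Set.inter_eq_self_of_subset_left hsub]
      · rw [if_neg hi, if_neg hi, Set.inter_comm, Set.diff_eq]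
    simp only [hval]
    have : ∀ i : Fin n, volume (if i ∈ T then A else (cube d \ A))
        = if i ∈ T then ENNReal.ofReal p else ENNReal.ofReal (1-p) := by
      intro i; by_cases hi : i ∈ T <;> simp [hi, hvol, hvolc]
    simp only [this]
    rw [Finset.prod_ite, Finset.prod_const, Finset.prod_const]
    congr 2
    · simp
    · rw [Finset.filter_not, Finset.filter_mem_eq_inter, Finset.univ_inter,
        Finset.card_sdiff_of_subset (Finset.subset_univ T), Finset.card_univ, Fintype.card_fin]
  calc unifCube d n {x | {i | x i ∈ A}.ncard ≤ a}
      ≤ ∑ j ∈ range (a+1), ∑ T ∈ powersetCard j (univ : Finset (Fin n)),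
          unifCube d n (E T) := by
        refine le_trans (measure_mono hsubE) ?_
        refine le_trans (measure_biUnion_finset_le _ _) ?_
        exact Finset.sum_le_sum fun j _ => measure_biUnion_finset_le _ _
    _ = ∑ j ∈ range (a+1), (n.choose j : ENNReal) *
          (ENNReal.ofReal p ^ j * ENNReal.ofReal (1-p) ^ (n - j)) := by
        refine Finset.sum_congr rfl fun j _ => ?_
        rw [Finset.sum_congr rfl (fun T hT => by
          rw [hmeasE T, mem_powersetCard_univ.mp hT]),
          Finset.sum_const, card_powersetCard, card_univ, Fintype.card_fin,
          nsmul_eq_mul]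
    _ ≤ ENNReal.ofReal (∑ j ∈ range (a+1), (n.choose j : ℝ) * p^j * (1-p)^(n-j)) := by
        rw [ENNReal.ofReal_sum_of_nonneg (fun j _ => by positivity)]
        refine Finset.sum_le_sum fun j _ => ?_
        rw [ENNReal.ofReal_mul (by positivity), ENNReal.ofReal_mul (by positivity),
          ENNReal.ofReal_pow hp0, ENNReal.ofReal_pow hq0, ENNReal.ofReal_natCast,
          mul_assoc]


variable {d : ℕ}

lemma allSparse_count (n m : ℕ) (x : Fin n → EuclideanSpace ℝ (Fin d))
    (S : Finset (Fin d → Fin m)) (h : ∀ v ∈ S, IsSparse d m n x v) :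
    {i : Fin n | x i ∈ ⋃ v ∈ S, cell d m v}.ncard ≤ S.card * (2 * 3 ^ d) := by
  classical
  have hncard : ∀ (A : Set (EuclideanSpace ℝ (Fin d))),
      {i : Fin n | x i ∈ A}.ncard = (univ.filter (fun i => x i ∈ A)).card := by
    intro A
    rw [← Set.ncard_coe_finset]
    congr 1
    ext i; simp
  rw [hncard]
  have hU : univ.filter (fun i => x i ∈ ⋃ v ∈ S, cell d m v)
      = S.biUnion (fun v => univ.filter (fun i => x i ∈ cell d m v)) := by
    ext i
    simp [Set.mem_iUnion]
  rw [hU, Finset.card_biUnion]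
  · calc ∑ v ∈ S, (univ.filter (fun i => x i ∈ cell d m v)).card
        ≤ ∑ _v ∈ S, 2 * 3 ^ d := by
          refine Finset.sum_le_sum fun v hv => ?_
          rw [← hncard]
          exact h v hv
      _ = S.card * (2 * 3 ^ d) := by rw [Finset.sum_const, smul_eq_mul]
  · intro u hu v hv huv
    simp only [Finset.disjoint_left, Finset.mem_filter]
    rintro i ⟨-, hiu⟩ ⟨-, hiv⟩
    exact (Set.disjoint_left.mp (cell_disjoint m huv)) hiu hiv

lemma main_bound (n m L : ℕ) (hd : d ≠ 0) :
    unifCube d n {x | L ≤ sparseCount d m n x}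
      ≤ ((m^d).choose L : ENNReal) *
        ENNReal.ofReal (∑ j ∈ range (L * (2 * 3^d) + 1),
          (n.choose j : ℝ) * ((L:ℝ)/(m:ℝ)^d)^j * (1-(L:ℝ)/(m:ℝ)^d)^(n-j)) := by
  classical
  set p : ℝ := (L:ℝ)/(m:ℝ)^d with hp
  have hp0 : 0 ≤ p := by positivity
  -- inclusion into union over S
  have hincl : {x : Fin n → EuclideanSpace ℝ (Fin d) | L ≤ sparseCount d m n x}
      ⊆ ⋃ S ∈ powersetCard L (univ : Finset (Fin d → Fin m)),
          {x : Fin n → EuclideanSpace ℝ (Fin d) |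
            {i : Fin n | x i ∈ ⋃ v ∈ S, cell d m v}.ncard ≤ L * (2 * 3^d)} := by
    intro x hx
    have hsc : L ≤ (univ.filter (fun v => IsSparse d m n x v)).card := by
      refine le_trans hx ?_
      unfold sparseCount
      rw [← Set.ncard_coe_finset]
      apply le_of_eq
      congr 1
      ext v; simp
    obtain ⟨S, hSsub, hScard⟩ := Finset.exists_subset_card_eq hsc
    refine Set.mem_biUnion (mem_powersetCard_univ.mpr hScard) ?_
    have hall : ∀ v ∈ S, IsSparse d m n x v := by
      intro v hv
      have := hSsub hv
      simpa using this
    have := allSparse_count n m x S hall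
    rw [hScard] at this
    exact this
  refine le_trans (measure_mono hincl) ?_
  refine le_trans (measure_biUnion_finset_le _ _) ?_
  have hbound : ∀ S ∈ powersetCard L (univ : Finset (Fin d → Fin m)),
      unifCube d n {x : Fin n → EuclideanSpace ℝ (Fin d) |
          {i : Fin n | x i ∈ ⋃ v ∈ S, cell d m v}.ncard ≤ L * (2 * 3^d)}
        ≤ ENNReal.ofReal (∑ j ∈ range (L * (2 * 3^d) + 1),
            (n.choose j : ℝ) * p^j * (1-p)^(n-j)) := by
    intro S hS
    have hScard := mem_powersetCard_univ.mp hS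
    refine prob_count_le _ _ _ ?_ ?_ p hp0 ?_
    · exact MeasurableSet.biUnion (Finset.countable_toSet S)
        (fun v _ => measurableSet_cell m v)
    · exact Set.iUnion₂_subset fun v _ => cell_subset_cube m v
    · rw [measure_biUnion_finset ?_ (fun v _ => measurableSet_cell m v)]
      · rw [Finset.sum_congr rfl (fun v _ => volume_cell m hd v), Finset.sum_const,
          nsmul_eq_mul, hScard, ← ENNReal.ofReal_natCast, ← ENNReal.ofReal_mul (by positivity)]
        congr 1
        rw [hp, mul_one_div]
      · intro u hu v hv huv
        exact cell_disjoint m huv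
  calc ∑ S ∈ powersetCard L (univ : Finset (Fin d → Fin m)),
        unifCube d n {x : Fin n → EuclideanSpace ℝ (Fin d) |
          {i : Fin n | x i ∈ ⋃ v ∈ S, cell d m v}.ncard ≤ L * (2 * 3^d)}
      ≤ ∑ _S ∈ powersetCard L (univ : Finset (Fin d → Fin m)),
          ENNReal.ofReal (∑ j ∈ range (L * (2 * 3^d) + 1),
            (n.choose j : ℝ) * p^j * (1-p)^(n-j)) := Finset.sum_le_sum hbound
    _ = ((m^d).choose L : ENNReal) * ENNReal.ofReal (∑ j ∈ range (L * (2 * 3^d) + 1),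
            (n.choose j : ℝ) * p^j * (1-p)^(n-j)) := by
        rw [Finset.sum_const, nsmul_eq_mul, card_powersetCard, card_univ]
        congr 2
        simp [Fintype.card_fun]



lemma pow_div_factorial_le_exp (x : ℝ) (hx : 0 ≤ x) (k : ℕ) :
    x ^ k / k.factorial ≤ Real.exp x := by
  refine le_trans ?_ (Real.sum_le_exp_of_nonneg hx (k+1))
  refine Finset.single_le_sum (f := fun i => x ^ i / (i.factorial : ℝ)) ?_ (self_mem_range_succ k)
  intro i _
  positivity

lemma choose_le_real (n k : ℕ) : (n.choose k : ℝ) ≤ (n:ℝ) ^ k / k.factorial := by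
  rw [le_div_iff₀ (by positivity)]
  calc (n.choose k : ℝ) * k.factorial = (n.descFactorial k : ℝ) := by
        rw [Nat.descFactorial_eq_factorial_mul_choose]; push_cast; ring
    _ ≤ (n:ℝ) ^ k := by exact_mod_cast Nat.descFactorial_le_pow n k

lemma choose_le_exp_pow (n k : ℕ) (hk : 1 ≤ k) :
    (n.choose k : ℝ) ≤ (Real.exp 1 * n / k) ^ k := by
  calc (n.choose k : ℝ) ≤ (n:ℝ) ^ k / k.factorial := choose_le_real n k
    _ = ((n:ℝ)/k) ^ k * ((k:ℝ) ^ k / k.factorial) := by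
        rw [div_pow]
        field_simp
    _ ≤ ((n:ℝ)/k) ^ k * Real.exp k := by
        exact mul_le_mul_of_nonneg_left (pow_div_factorial_le_exp _ (by positivity) k)
          (by positivity)
    _ = (Real.exp 1 * n / k) ^ k := by
        have : Real.exp (k:ℝ) = Real.exp 1 ^ k := by
          rw [← Real.exp_nat_mul, mul_one]
        rw [this, mul_div_assoc, mul_pow, mul_comm]

lemma factorial_ratio (j i : ℕ) : (j + i).factorial ≤ j.factorial * (j + i) ^ i := by
  induction i with
  | zero => simp
  | succ i ih =>
    have : (j + (i+1)).factorial = (j + i + 1) * (j + i).factorial := by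
      rw [← Nat.add_assoc, Nat.factorial_succ]
    rw [this]
    calc (j + i + 1) * (j + i).factorial ≤ (j + i + 1) * (j.factorial * (j + i) ^ i) :=
          Nat.mul_le_mul_left _ ih
      _ ≤ (j + i + 1) * (j.factorial * (j + i + 1) ^ i) := by
          refine Nat.mul_le_mul_left _ (Nat.mul_le_mul_left _ (Nat.pow_le_pow_left ?_ _))
          omega
      _ = j.factorial * (j + (i+1)) ^ (i+1) := by ring_nf


lemma pow_div_fact_le (x : ℝ) (hx : 0 ≤ x) (a : ℕ) (ha : 1 ≤ a) :
    x ^ a / a.factorial ≤ (Real.exp 1 * x / a) ^ a := by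
  calc x ^ a / a.factorial = (x/a) ^ a * ((a:ℝ) ^ a / a.factorial) := by
        rw [div_pow]; field_simp
    _ ≤ (x/a) ^ a * Real.exp a :=
        mul_le_mul_of_nonneg_left (pow_div_factorial_le_exp _ (by positivity) a) (by positivity)
    _ = (Real.exp 1 * x / a) ^ a := by
        have : Real.exp (a:ℝ) = Real.exp 1 ^ a := by rw [← Real.exp_nat_mul, mul_one]
        rw [this, mul_div_assoc, mul_pow, mul_comm]

lemma binom_tail (n a : ℕ) (p : ℝ) (hp0 : 0 ≤ p) (hp1 : p ≤ 1) (ha1 : 1 ≤ a)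
    (hanp : (a:ℝ) ≤ n * p) :
    ∑ j ∈ range (a+1), (n.choose j : ℝ) * p^j * (1-p)^(n-j)
      ≤ ((a:ℝ)+1) * ((Real.exp 1 * ((n:ℝ)*p) / a)^a * Real.exp (-p*((n:ℝ)-a))) := by
  have han : a ≤ n := by
    have h1 : (a:ℝ) ≤ n := le_trans hanp (by nlinarith [Nat.cast_nonneg (α := ℝ) n])
    exact_mod_cast h1
  have hterm : ∀ j ∈ range (a+1), (n.choose j : ℝ) * p^j * (1-p)^(n-j)
      ≤ (Real.exp 1 * ((n:ℝ)*p) / a)^a * Real.exp (-p*((n:ℝ)-a)) := by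
    intro j hj
    have hja : j ≤ a := Nat.lt_succ_iff.mp (mem_range.mp hj)
    have h1 : (n.choose j : ℝ) * p^j ≤ ((n:ℝ)*p)^j / j.factorial := by
      rw [mul_pow, ← div_mul_eq_mul_div]
      exact mul_le_mul_of_nonneg_right (choose_le_real n j) (by positivity)
    have h2 : ((n:ℝ)*p)^j / j.factorial ≤ ((n:ℝ)*p)^a / a.factorial := by
      rw [div_le_div_iff₀ (by positivity) (by positivity)]
      have hfact : (a.factorial : ℝ) ≤ j.factorial * ((n:ℝ)*p) ^ (a - j) := by
        have h3 := factorial_ratio j (a - j)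
        rw [Nat.add_sub_cancel' hja] at h3
        calc (a.factorial : ℝ) ≤ (j.factorial * a ^ (a-j) : ℕ) := by exact_mod_cast h3
          _ = (j.factorial : ℝ) * (a:ℝ) ^ (a-j) := by push_cast; ring
          _ ≤ j.factorial * ((n:ℝ)*p) ^ (a-j) := by
              refine mul_le_mul_of_nonneg_left (pow_le_pow_left₀ (by positivity) hanp _)
                (by positivity)
      calc ((n:ℝ)*p)^j * a.factorial ≤ ((n:ℝ)*p)^j * (j.factorial * ((n:ℝ)*p) ^ (a - j)) :=
            mul_le_mul_of_nonneg_left hfact (by positivity)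
        _ = ((n:ℝ)*p)^a * j.factorial := by
            rw [← mul_assoc, mul_comm (((n:ℝ)*p)^j), mul_assoc, ← pow_add,
              Nat.add_sub_cancel' hja, mul_comm]
    have h3 : ((n:ℝ)*p)^a / a.factorial ≤ (Real.exp 1 * ((n:ℝ)*p) / a)^a :=
      pow_div_fact_le _ (by positivity) a ha1
    have h4 : (1-p)^(n-j) ≤ Real.exp (-p*((n:ℝ)-a)) := by
      have hq0 : (0:ℝ) ≤ 1 - p := by linarith
      have hq1 : (1:ℝ) - p ≤ 1 := by linarith
      calc (1-p)^(n-j) ≤ (1-p)^(n-a) := pow_le_pow_of_le_one hq0 hq1 (Nat.sub_le_sub_left hja n)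
        _ ≤ Real.exp (-p) ^ (n-a) := by
            refine pow_le_pow_left₀ hq0 ?_ _
            linarith [Real.add_one_le_exp (-p)]
        _ = Real.exp (-p*((n:ℝ)-a)) := by
            rw [← Real.exp_nat_mul]
            congr 1
            rw [Nat.cast_sub han]
            ring
    calc (n.choose j : ℝ) * p^j * (1-p)^(n-j)
        ≤ (((n:ℝ)*p)^a / a.factorial) * (1-p)^(n-j) := by
          exact mul_le_mul_of_nonneg_right (le_trans h1 h2) (pow_nonneg (by linarith) _)
      _ ≤ (Real.exp 1 * ((n:ℝ)*p) / a)^a * Real.exp (-p*((n:ℝ)-a)) := by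
          exact mul_le_mul h3 h4 (pow_nonneg (by linarith) _) (by positivity)
  calc ∑ j ∈ range (a+1), (n.choose j : ℝ) * p^j * (1-p)^(n-j)
      ≤ ∑ _j ∈ range (a+1), (Real.exp 1 * ((n:ℝ)*p) / a)^a * Real.exp (-p*((n:ℝ)-a)) :=
        Finset.sum_le_sum hterm
    _ = ((a:ℝ)+1) * ((Real.exp 1 * ((n:ℝ)*p) / a)^a * Real.exp (-p*((n:ℝ)-a))) := by
        rw [Finset.sum_const, card_range, nsmul_eq_mul]
        push_cast; ring


noncomputable def kap0 (R' : ℕ) : ℝ := 4*Real.exp (3+R') * 4^R' + 32*R' + 64 + 2*R'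

lemma kap0_pos (R' : ℕ) : 0 < kap0 R' := by
  unfold kap0
  positivity

lemma kap0_ge (R' : ℕ) :
    4*Real.exp (3+R') * 4^R' ≤ kap0 R' ∧ (32:ℝ)*R' ≤ kap0 R' ∧ (64:ℝ) ≤ kap0 R'
      ∧ (2:ℝ)*R' ≤ kap0 R' := by
  unfold kap0
  have h1 : (0:ℝ) < 4*Real.exp (3+R') * 4^R' := by positivity
  have h2 : (0:ℝ) ≤ 32*R' := by positivity
  have h3 : (0:ℝ) ≤ 2*R' := by positivity
  refine ⟨by linarith, by linarith, by linarith, by linarith⟩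

lemma B_le_half (R' : ℕ) (hR : 1 ≤ R') (κ K Mr L n : ℝ)
    (hκ : kap0 R' ≤ κ)
    (hK1 : K ≤ κ) (hK2 : κ/2 ≤ K) (hMr : Mr ≤ 2*n/κ) (hMr0 : 0 ≤ Mr) (hL1 : 1 ≤ L)
    (hnL : n/L ≤ Real.exp (K/2)) (hn0 : 0 ≤ n)
    (hKLR : K*L*(R':ℝ)/n ≤ 2) (hKLR0 : 0 ≤ K*L*(R':ℝ)/n) :
    Real.exp 1 * Mr / L * (Real.exp 1 * K / R')^R' * Real.exp (-K)
      * Real.exp (K*L*(R':ℝ)/n) ≤ 1/2 := by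
  obtain ⟨hκ1, hκ2, hκ3, hκ4⟩ := kap0_ge R'
  have hκpos : 0 < κ := lt_of_lt_of_le (kap0_pos R') hκ
  have hKpos : 0 < K := lt_of_lt_of_le (by positivity) hK2
  have hR'pos : (0:ℝ) < R' := by exact_mod_cast hR
  have hLpos : (0:ℝ) < L := by linarith
  have e1 := Real.exp_pos 1
  -- step 1 : eMr/L ≤ (2e/κ) * exp(K/2)
  have h1 : Real.exp 1 * Mr / L ≤ (2*Real.exp 1/κ) * Real.exp (K/2) := by
    calc Real.exp 1 * Mr / L ≤ Real.exp 1 * (2*n/κ) / L := by gcongr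
      _ = (2*Real.exp 1/κ) * (n/L) := by field_simp
      _ ≤ (2*Real.exp 1/κ) * Real.exp (K/2) := by
          refine mul_le_mul_of_nonneg_left hnL (by positivity)
  have h2 : (Real.exp 1 * K / R')^R' ≤ (Real.exp 1 * κ / R')^R' := by gcongr
  have h3 : Real.exp (K*L*(R':ℝ)/n) ≤ Real.exp 2 := Real.exp_le_exp.mpr hKLR
  have hbig : Real.exp 1 * Mr / L * (Real.exp 1 * K / R')^R' * Real.exp (-K)
      * Real.exp (K*L*(R':ℝ)/n)
      ≤ ((2*Real.exp 1/κ) * Real.exp (K/2)) * (Real.exp 1 * κ / R')^R'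
          * Real.exp (-K) * Real.exp 2 := by
    have hA : (0:ℝ) ≤ Real.exp 1 * Mr / L := by positivity
    refine mul_le_mul (mul_le_mul (mul_le_mul h1 h2 (by positivity) (by positivity))
      le_rfl (Real.exp_pos _).le (by positivity)) h3 (Real.exp_pos _).le (by positivity)
  have hexp : Real.exp (K/2) * Real.exp (-K) * Real.exp 2 = Real.exp (2 - K/2) := by
    rw [← Real.exp_add, ← Real.exp_add]; ring_nf
  have hrearr : ((2*Real.exp 1/κ) * Real.exp (K/2)) * (Real.exp 1 * κ / R')^R'
      * Real.exp (-K) * Real.exp 2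
      = (2*Real.exp 1/κ) * (Real.exp 1 * κ / R')^R' * Real.exp (2 - K/2) := by
    rw [← hexp]; ring
  have hexp2 : Real.exp (2 - K/2) ≤ Real.exp 2 * Real.exp (-(κ/4)) := by
    rw [← Real.exp_add]
    apply Real.exp_le_exp.mpr
    linarith
  -- κ^R' * exp(-κ/4) ≤ 4^R' * R'!
  have hkey : κ^R' * Real.exp (-(κ/4)) ≤ 4^R' * (R'.factorial : ℝ) := by
    have h := pow_div_factorial_le_exp (κ/4) (by positivity) R'
    have h' : (κ/4)^R' ≤ (R'.factorial : ℝ) * Real.exp (κ/4) := by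
      rw [div_le_iff₀ (by positivity)] at h
      linarith [h]
    have hxx : κ^R' = (κ/4)^R' * 4^R' := by
      rw [div_pow]; field_simp
    rw [hxx]
    calc (κ/4)^R' * 4^R' * Real.exp (-(κ/4))
        ≤ ((R'.factorial : ℝ) * Real.exp (κ/4)) * 4^R' * Real.exp (-(κ/4)) := by
          refine mul_le_mul_of_nonneg_right (mul_le_mul_of_nonneg_right h' (by positivity))
            (Real.exp_pos _).le
      _ = 4^R' * (R'.factorial : ℝ) * (Real.exp (κ/4) * Real.exp (-(κ/4))) := by ring
      _ = 4^R' * (R'.factorial : ℝ) := by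
          rw [← Real.exp_add, add_neg_cancel, Real.exp_zero, mul_one]
  -- final computation
  have hfact : (R'.factorial : ℝ) ≤ (R':ℝ)^R' := by exact_mod_cast Nat.factorial_le_pow R'
  have hfinal : (2*Real.exp 1/κ) * (Real.exp 1 * κ / R')^R' * Real.exp (2 - K/2)
      ≤ 2 * Real.exp (3 + R') * 4^R' / κ := by
    calc (2*Real.exp 1/κ) * (Real.exp 1 * κ / R')^R' * Real.exp (2 - K/2)
        ≤ (2*Real.exp 1/κ) * (Real.exp 1 * κ / R')^R' * (Real.exp 2 * Real.exp (-(κ/4))) := by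
          refine mul_le_mul_of_nonneg_left hexp2 (by positivity)
      _ = (2*Real.exp 1 * Real.exp 2 * (Real.exp 1 / R')^R' / κ) * (κ^R' * Real.exp (-(κ/4))) := by
          have hiden : (Real.exp 1 * κ / (R':ℝ))^R' = (Real.exp 1/(R':ℝ))^R' * κ^R' := by
            rw [mul_div_right_comm, mul_pow]
          rw [hiden]; ring
      _ ≤ (2*Real.exp 1 * Real.exp 2 * (Real.exp 1 / R')^R' / κ) * (4^R' * (R'.factorial:ℝ)) := by
          refine mul_le_mul_of_nonneg_left hkey (by positivity)
      _ ≤ 2 * Real.exp (3 + R') * 4^R' / κ := by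
          have hpow : (Real.exp 1 / (R':ℝ))^R' * (R'.factorial:ℝ) ≤ Real.exp 1 ^ R' := by
            calc (Real.exp 1 / (R':ℝ))^R' * (R'.factorial:ℝ)
                ≤ (Real.exp 1 / (R':ℝ))^R' * (R':ℝ)^R' := by
                  refine mul_le_mul_of_nonneg_left hfact (by positivity)
              _ = ((Real.exp 1 / (R':ℝ)) * (R':ℝ))^R' := by rw [mul_pow]
              _ = Real.exp 1 ^ R' := by rw [div_mul_cancel₀ _ (ne_of_gt hR'pos)]
          have hexp3 : Real.exp (3 + (R':ℝ)) = Real.exp 1 * Real.exp 2 * Real.exp 1 ^ R' := by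
            rw [show (3:ℝ) + (R':ℝ) = 1 + 2 + (R':ℝ) by ring, Real.exp_add, Real.exp_add]
            congr 1
            rw [← Real.exp_nat_mul, mul_one]
          calc (2*Real.exp 1 * Real.exp 2 * (Real.exp 1 / R')^R' / κ) * (4^R' * (R'.factorial:ℝ))
              = (2*Real.exp 1*Real.exp 2*4^R'/κ) * ((Real.exp 1/(R':ℝ))^R' * (R'.factorial:ℝ)) := by
                ring
            _ ≤ (2*Real.exp 1*Real.exp 2*4^R'/κ) * Real.exp 1^R' :=
                mul_le_mul_of_nonneg_left hpow (by positivity)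
            _ = 2 * Real.exp (3 + (R':ℝ)) * 4^R' / κ := by rw [hexp3]; ring
  calc Real.exp 1 * Mr / L * (Real.exp 1 * K / R')^R' * Real.exp (-K)
      * Real.exp (K*L*(R':ℝ)/n)
      ≤ (2*Real.exp 1/κ) * (Real.exp 1 * κ / R')^R' * Real.exp (2 - K/2) := by
        rw [← hrearr]; exact hbig
    _ ≤ 2 * Real.exp (3 + R') * 4^R' / κ := hfinal
    _ ≤ 1/2 := by
        rw [div_le_div_iff₀ hκpos (by norm_num : (0:ℝ) < 2)]
        nlinarith [hκ1, hκ]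

end Aas

open Aas Finset in
set_option maxHeartbeats 1000000 in
theorem aas_few_sparse_cells (d : ℕ) (hd : 1 ≤ d) :
    ∃ C₀ : ℝ, ∀ C : ℝ, C₀ ≤ C →
    Tendsto
      (fun n : ℕ =>
        unifCube d n
          {x |
            ((sparseCount d (⌈2 * Real.sqrt d / ((C / n) ^ ((1 : ℝ) / d))⌉₊) n x : ℝ))
              ≤ Real.exp
                  (-((n : ℝ) /
                      ((⌈2 * Real.sqrt d / ((C / n) ^ ((1 : ℝ) / d))⌉₊ : ℝ) ^ d)) / 2)
                  * n})
      atTop (nhds (1 : ENNReal)) := by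
  classical
  have hd0 : d ≠ 0 := Nat.one_le_iff_ne_zero.mp hd
  set R' : ℕ := 2 * 3 ^ d with hR'
  have hR'1 : 1 ≤ R' := by
    have : 0 < 2 * 3 ^ d := by positivity
    omega
  have hR'r : (0:ℝ) < R' := by exact_mod_cast hR'1
  have hsqrtd : (0:ℝ) < Real.sqrt d := Real.sqrt_pos.mpr (by exact_mod_cast Nat.pos_of_ne_zero hd0)
  set sq : ℝ := 2 * Real.sqrt d with hsq
  have hsqpos : 0 < sq := by rw [hsq]; linarith
  have hsqd : (0:ℝ) < sq ^ d := pow_pos hsqpos d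
  refine ⟨sq ^ d * kap0 R', ?_⟩
  intro C hC
  set κ : ℝ := C / sq ^ d with hκdef
  have hκ : kap0 R' ≤ κ := by
    rw [hκdef, le_div_iff₀ hsqd]
    calc kap0 R' * sq ^ d = sq ^ d * kap0 R' := by ring
      _ ≤ C := hC
  have hκpos : 0 < κ := lt_of_lt_of_le (kap0_pos R') hκ
  have hCpos : 0 < C := by
    have h2 := mul_pos hκpos hsqd
    rwa [hκdef, div_mul_cancel₀ _ (ne_of_gt hsqd)] at h2
  obtain ⟨hκ1, hκ2, hκ3, hκ4⟩ := kap0_ge R'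
  -- auxiliary sequences
  set FL : ℕ → ℕ := fun n => ⌊Real.exp (-κ/2) * n⌋₊ + 1 with hFL
  set g : ℕ → ℝ := fun n => ((n:ℝ)*(R':ℝ)+1) * (1/2:ℝ)^(FL n) with hg
  -- tendsto of t
  set t : ℕ → ℝ := fun n => sq * ((n:ℝ)/C) ^ ((1:ℝ)/d) with ht
  have htt : Tendsto t atTop atTop := by
    rw [ht]
    apply Tendsto.const_mul_atTop hsqpos
    exact (tendsto_rpow_atTop (by positivity)).comp
      ((tendsto_natCast_atTop_atTop (R := ℝ)).atTop_div_const hCpos)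
  -- the main eventual estimate
  have key : ∀ᶠ n in atTop,
      1 - ENNReal.ofReal (g n) ≤
        unifCube d n
          {x |
            ((sparseCount d (⌈2 * Real.sqrt d / ((C / n) ^ ((1 : ℝ) / d))⌉₊) n x : ℝ))
              ≤ Real.exp
                  (-((n : ℝ) /
                      ((⌈2 * Real.sqrt d / ((C / n) ^ ((1 : ℝ) / d))⌉₊ : ℝ) ^ d)) / 2)
                  * n} := by
    filter_upwards [htt.eventually_ge_atTop (2*(d:ℝ)), htt.eventually_ge_atTop 2,
      eventually_ge_atTop 2,
      (tendsto_natCast_atTop_atTop (R := ℝ)).eventually_ge_atTop (2*κ),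
      (tendsto_natCast_atTop_atTop (R := ℝ)).eventually_ge_atTop (κ*(R':ℝ))]
      with n ht2d ht2 hn2 hn2κ hnκR
    have hn0 : (0:ℝ) < n := by
      have : (2:ℕ) ≤ n := hn2
      exact_mod_cast Nat.lt_of_lt_of_le (by norm_num) hn2
    -- identify the ceiling argument with t n
    have hrn : 2 * Real.sqrt d / ((C / (n:ℝ)) ^ ((1 : ℝ) / d)) = t n := by
      rw [ht, hsq]
      rw [div_eq_mul_inv, ← Real.inv_rpow (by positivity), inv_div]
    set m : ℕ := ⌈2 * Real.sqrt d / ((C / (n:ℝ)) ^ ((1 : ℝ) / d))⌉₊ with hm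
    have htpos : (0:ℝ) < t n := lt_of_lt_of_le (by norm_num) ht2
    have hm_low : t n ≤ m := by rw [hm, hrn]; exact Nat.le_ceil _
    have hm_up : (m:ℝ) ≤ t n + 1 := by
      rw [hm, hrn]
      exact (Nat.ceil_lt_add_one htpos.le).le
    have hmpos : (0:ℝ) < m := lt_of_lt_of_le htpos hm_low
    have htd : (t n)^d = (n:ℝ)/κ := by
      rw [ht, mul_pow, ← Real.rpow_natCast (((n:ℝ)/C) ^ ((1:ℝ)/d)) d,
        ← Real.rpow_mul (by positivity), one_div,
        inv_mul_cancel₀ (by exact_mod_cast hd0 : (d:ℝ) ≠ 0), Real.rpow_one, hκdef]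
      field_simp
    set Mr : ℝ := ((m:ℝ))^d with hMr
    have hMrpos : 0 < Mr := pow_pos hmpos d
    have hMr_low : (n:ℝ)/κ ≤ Mr := by
      rw [← htd, hMr]
      exact pow_le_pow_left₀ htpos.le hm_low d
    have hexphalf : Real.exp ((1:ℝ)/2) ≤ 2 := by
      have hsq2 : Real.exp ((1:ℝ)/2) ^ 2 = Real.exp 1 := by
        rw [← Real.exp_nat_mul]; norm_num
      by_contra hc
      push_neg at hc
      have h4 : (2:ℝ)^2 < Real.exp ((1:ℝ)/2)^2 :=
        pow_lt_pow_left₀ hc (by norm_num) (by norm_num)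
      rw [hsq2] at h4
      norm_num at h4
      linarith [Real.exp_one_lt_d9]
    have hMr_up : Mr ≤ 2*(n:ℝ)/κ := by
      have h1 : (m:ℝ) ≤ t n * (1 + 1/(t n)) := by
        rw [mul_add, mul_one, mul_one_div, div_self (ne_of_gt htpos)]
        exact hm_up
      have h2 : Mr ≤ (t n)^d * (1 + 1/(t n))^d := by
        rw [hMr, ← mul_pow]
        exact pow_le_pow_left₀ hmpos.le h1 d
      have h3 : (1 + 1/(t n))^d ≤ 2 := by
        calc (1 + 1/(t n))^d ≤ (Real.exp (1/(t n)))^d := by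
              refine pow_le_pow_left₀ (by positivity) ?_ d
              linarith [Real.add_one_le_exp (1/(t n))]
          _ = Real.exp ((d:ℝ)/(t n)) := by
              rw [← Real.exp_nat_mul, mul_one_div]
          _ ≤ Real.exp ((1:ℝ)/2) := by
              apply Real.exp_le_exp.mpr
              rw [div_le_div_iff₀ htpos (by norm_num)]
              linarith
          _ ≤ 2 := hexphalf
      calc Mr ≤ (t n)^d * (1 + 1/(t n))^d := h2
        _ ≤ (t n)^d * 2 := by
            refine mul_le_mul_of_nonneg_left h3 (by positivity)
        _ = 2*(n:ℝ)/κ := by rw [htd]; ring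
    set K : ℝ := (n:ℝ) / Mr with hK
    have hKpos : 0 < K := by positivity
    have hK_up : K ≤ κ := by
      rw [hK, div_le_iff₀ hMrpos]
      calc (n:ℝ) = κ * ((n:ℝ)/κ) := by field_simp
        _ ≤ κ * Mr := by exact mul_le_mul_of_nonneg_left hMr_low hκpos.le
    have hK_low : κ/2 ≤ K := by
      rw [hK, le_div_iff₀ hMrpos]
      calc κ/2 * Mr ≤ κ/2 * (2*(n:ℝ)/κ) := by
            exact mul_le_mul_of_nonneg_left hMr_up (by positivity)
        _ = (n:ℝ) := by field_simp
    -- the L sequence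
    set y : ℝ := Real.exp (-((n:ℝ) / ((m:ℝ))^d) / 2) * n with hy
    have hyK : y = Real.exp (-K/2) * n := by rw [hy, hK, hMr]
    have hy0 : 0 ≤ y := by rw [hyK]; positivity
    set L : ℕ := ⌊y⌋₊ + 1 with hL
    have hL1 : 1 ≤ L := Nat.le_add_left 1 _
    have hLr1 : (1:ℝ) ≤ L := by exact_mod_cast hL1
    have hLpos : (0:ℝ) < L := by linarith
    have hy_lt_L : y < L := by
      rw [hL]; push_cast; exact Nat.lt_floor_add_one y
    have hL_ub : (L:ℝ) ≤ y + 1 := by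
      rw [hL]; push_cast
      linarith [Nat.floor_le hy0]
    -- exp bounds on κ
    have hexpk2 : Real.exp (-(κ/4)) ≤ 32/κ^2 := by
      have h := pow_div_factorial_le_exp (κ/4) (by positivity) 2
      have hq : κ^2/32 ≤ Real.exp (κ/4) := by
        calc κ^2/32 = (κ/4)^2/(Nat.factorial 2 : ℝ) := by
              rw [show (Nat.factorial 2 : ℝ) = 2 by norm_num [Nat.factorial]]
              ring
          _ ≤ Real.exp (κ/4) := h
      have h3 : (Real.exp (κ/4))⁻¹ ≤ (κ^2/32)⁻¹ := by
        apply inv_anti₀ (by positivity) hq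
      rw [Real.exp_neg]
      calc (Real.exp (κ/4))⁻¹ ≤ (κ^2/32)⁻¹ := h3
        _ = 32/κ^2 := by rw [inv_div]
    have hexpk : Real.exp (-(κ/4)) ≤ 1/(2*κ) := by
      refine le_trans hexpk2 ?_
      rw [div_le_div_iff₀ (by positivity) (by positivity)]
      have h64 : (64:ℝ) ≤ κ := le_trans hκ3 hκ
      nlinarith [mul_le_mul_of_nonneg_right h64 hκpos.le]
    have hexpK2 : Real.exp (-K/2) ≤ Real.exp (-(κ/4)) := by
      apply Real.exp_le_exp.mpr
      linarith
    have hL_ub2 : (L:ℝ) ≤ Real.exp (-(κ/4)) * n + 1 := by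
      refine le_trans hL_ub ?_
      have : y ≤ Real.exp (-(κ/4)) * n := by
        rw [hyK]
        exact mul_le_mul_of_nonneg_right hexpK2 hn0.le
      linarith
    have hLn2 : (L:ℝ) ≤ (n:ℝ)/(2*κ) + 1 := by
      refine le_trans hL_ub2 ?_
      have : Real.exp (-(κ/4)) * n ≤ 1/(2*κ) * n :=
        mul_le_mul_of_nonneg_right hexpk hn0.le
      rw [one_div, inv_mul_eq_div] at this
      linarith
    have hone_le : (1:ℝ) ≤ (n:ℝ)/(2*κ) := by
      rw [le_div_iff₀ (by positivity)]
      linarith [hn2κ]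
    have hLM : (L:ℝ) ≤ Mr := by
      have h1 : (L:ℝ) ≤ (n:ℝ)/(2*κ) + (n:ℝ)/(2*κ) := by linarith
      have h2 : (n:ℝ)/(2*κ) + (n:ℝ)/(2*κ) = (n:ℝ)/κ := by field_simp; ring
      linarith [hMr_low]
    have hLn : (L:ℝ) ≤ (n:ℝ) := by
      have h2 : (n:ℝ)/(2*κ) ≤ (n:ℝ)/2 := by
        apply div_le_div_of_nonneg_left hn0.le (by norm_num)
        linarith
      have hn2' : (2:ℝ) ≤ (n:ℝ) := by exact_mod_cast hn2
      have h3 : (n:ℝ)/2 + (n:ℝ)/2 = (n:ℝ) := by ring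
      linarith [hLn2]
    set p : ℝ := (L:ℝ)/Mr with hp
    have hp0 : 0 ≤ p := by positivity
    have hp1 : p ≤ 1 := by rw [hp, div_le_one hMrpos]; exact hLM
    have hnp : (n:ℝ)*p = (L:ℝ)*K := by rw [hp, hK]; field_simp
    have hRK : (R':ℝ) ≤ K := by linarith [hκ4, hκ]
    have ha1 : 1 ≤ L * R' := Nat.one_le_iff_ne_zero.mpr
      (Nat.mul_ne_zero (by omega) (by omega))
    have hanp : ((L * R' : ℕ):ℝ) ≤ (n:ℝ) * p := by
      rw [Nat.cast_mul, hnp]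
      exact mul_le_mul_of_nonneg_left hRK (Nat.cast_nonneg L)
    have hLdivn : (L:ℝ)/n ≤ Real.exp (-(κ/4)) + 1/n := by
      rw [div_le_iff₀ hn0, add_mul, div_mul_cancel₀ _ (ne_of_gt hn0)]
      exact hL_ub2
    have hKLRn : K*(L:ℝ)*(R':ℝ)/(n:ℝ) ≤ 2 := by
      have e1 : K*(L:ℝ)*(R':ℝ)/(n:ℝ) = (K*(R':ℝ))*((L:ℝ)/n) := by ring
      have e2 : (K*(R':ℝ))*((L:ℝ)/n) ≤ (κ*(R':ℝ))*(Real.exp (-(κ/4)) + 1/n) := by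
        refine mul_le_mul (mul_le_mul_of_nonneg_right hK_up (by positivity)) hLdivn
          (by positivity) (by positivity)
      have e3 : (κ*(R':ℝ))*(Real.exp (-(κ/4)) + 1/n)
          = κ*(R':ℝ)*Real.exp (-(κ/4)) + κ*(R':ℝ)/n := by ring
      have e4 : κ*(R':ℝ)*Real.exp (-(κ/4)) ≤ 1 := by
        calc κ*(R':ℝ)*Real.exp (-(κ/4)) ≤ κ*(R':ℝ)*(32/κ^2) := by
              refine mul_le_mul_of_nonneg_left hexpk2 (by positivity)
          _ = 32*(R':ℝ)/κ := by field_simp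
          _ ≤ 1 := by rw [div_le_one hκpos]; linarith [hκ2, hκ]
      have e5 : κ*(R':ℝ)/n ≤ 1 := by
        rw [div_le_one hn0]; exact hnκR
      calc K*(L:ℝ)*(R':ℝ)/(n:ℝ) = (K*(R':ℝ))*((L:ℝ)/n) := by ring
        _ ≤ (κ*(R':ℝ))*(Real.exp (-(κ/4)) + 1/n) := e2
        _ = κ*(R':ℝ)*Real.exp (-(κ/4)) + κ*(R':ℝ)/n := by ring
        _ ≤ 2 := by linarith [e4, e5]
    have hKLR0 : 0 ≤ K*(L:ℝ)*(R':ℝ)/(n:ℝ) := by positivity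
    have hnL2 : (n:ℝ)/(L:ℝ) ≤ Real.exp (K/2) := by
      have hprod : Real.exp (K/2) * Real.exp (-K/2) = 1 := by
        rw [← Real.exp_add, show K/2 + -K/2 = 0 by ring, Real.exp_zero]
      rw [div_le_iff₀ hLpos]
      calc (n:ℝ) = Real.exp (K/2) * (Real.exp (-K/2) * n) := by
            rw [← mul_assoc, hprod, one_mul]
        _ ≤ Real.exp (K/2) * (L:ℝ) := by
            refine mul_le_mul_of_nonneg_left ?_ (Real.exp_pos _).le
            rw [← hyK]; exact hy_lt_L.le
    -- B ≤ 1/2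
    set B : ℝ := Real.exp 1 * Mr / (L:ℝ) * (Real.exp 1 * K / (R':ℝ))^R'
      * Real.exp (-K + K*(L:ℝ)*(R':ℝ)/(n:ℝ)) with hB
    have hB0 : 0 ≤ B := by positivity
    have hBhalf : B ≤ 1/2 := by
      have h := B_le_half R' hR'1 κ K Mr (L:ℝ) (n:ℝ) hκ hK_up hK_low hMr_up hMrpos.le
        hLr1 hnL2 hn0.le hKLRn hKLR0
      have hBe : B = Real.exp 1 * Mr / (L:ℝ) * (Real.exp 1 * K / (R':ℝ))^R'
          * Real.exp (-K) * Real.exp (K*(L:ℝ)*(R':ℝ)/(n:ℝ)) := by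
        rw [hB, Real.exp_add]; ring
      rw [hBe]; exact h
    -- identities
    have hid1 : Real.exp 1 * ((n:ℝ)*p) / ((L*R' : ℕ):ℝ) = Real.exp 1 * K / (R':ℝ) := by
      rw [Nat.cast_mul, hnp]
      rw [div_eq_div_iff (by positivity) (by positivity)]
      ring
    have hid3 : Real.exp (-p*((n:ℝ)-((L*R':ℕ):ℝ))) = Real.exp (-K + K*(L:ℝ)*(R':ℝ)/(n:ℝ))^L := by
      rw [← Real.exp_nat_mul]
      congr 1
      rw [Nat.cast_mul, hp, hK]
      field_simp
      ring
    -- the comp set bound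
    have hFLL : FL n ≤ L := by
      rw [hFL, hL]
      have : Real.exp (-κ/2) * n ≤ y := by
        rw [hyK]
        refine mul_le_mul_of_nonneg_right (Real.exp_le_exp.mpr ?_) hn0.le
        linarith
      exact Nat.add_le_add_right (Nat.floor_le_floor this) 1
    have hcompb : unifCube d n {x | L ≤ sparseCount d m n x} ≤ ENNReal.ofReal (g n) := by
      have hS0 : 0 ≤ ∑ j ∈ range (L * R' + 1),
          (n.choose j : ℝ) * p^j * (1-p)^(n-j) := by
        refine Finset.sum_nonneg fun j _ => ?_
        have : (0:ℝ) ≤ 1 - p := by linarith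
        positivity
      calc unifCube d n {x | L ≤ sparseCount d m n x}
          ≤ ((m^d).choose L : ENNReal) * ENNReal.ofReal (∑ j ∈ range (L * R' + 1),
              (n.choose j : ℝ) * p^j * (1-p)^(n-j)) := by
            rw [hp, hMr, hR']
            exact main_bound n m L hd0
        _ = ENNReal.ofReal ((((m^d).choose L : ℕ):ℝ) * ∑ j ∈ range (L * R' + 1),
              (n.choose j : ℝ) * p^j * (1-p)^(n-j)) := by
            rw [← ENNReal.ofReal_natCast, ← ENNReal.ofReal_mul (Nat.cast_nonneg _)]
        _ ≤ ENNReal.ofReal (g n) := by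
            apply ENNReal.ofReal_le_ofReal
            -- real computation
            have hbt := binom_tail n (L*R') p hp0 hp1 ha1 hanp
            have hchoose : (((m^d).choose L : ℕ):ℝ) ≤ (Real.exp 1 * Mr / (L:ℝ))^L := by
              have h := choose_le_exp_pow (m^d) L hL1
              rwa [show ((m^d : ℕ):ℝ) = Mr by rw [hMr]; push_cast; ring] at h
            calc (((m^d).choose L : ℕ):ℝ) * ∑ j ∈ range (L * R' + 1),
                  (n.choose j : ℝ) * p^j * (1-p)^(n-j)
                ≤ (Real.exp 1 * Mr / (L:ℝ))^L * ((((L*R':ℕ):ℝ)+1) *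
                    ((Real.exp 1 * ((n:ℝ)*p) / ((L*R':ℕ):ℝ))^(L*R')
                      * Real.exp (-p*((n:ℝ)-((L*R':ℕ):ℝ))))) :=
                  mul_le_mul hchoose hbt hS0 (by positivity)
              _ = (((L*R':ℕ):ℝ)+1) * B^L := by
                  rw [hid1, hid3, hB, mul_comm L R', pow_mul]
                  ring
              _ ≤ ((n:ℝ)*(R':ℝ)+1) * ((1:ℝ)/2)^(FL n) := by
                  refine mul_le_mul ?_ ?_ (by positivity) (by positivity)
                  · have := mul_le_mul_of_nonneg_right hLn (le_of_lt hR'r)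
                    rw [Nat.cast_mul]
                    linarith
                  · calc B^L ≤ ((1:ℝ)/2)^L := pow_le_pow_left₀ hB0 hBhalf L
                      _ ≤ ((1:ℝ)/2)^(FL n) :=
                        pow_le_pow_of_le_one (by norm_num) (by norm_num) hFLL
              _ = g n := by rw [hg]
    -- split
    rw [tsub_le_iff_right]
    calc (1:ENNReal) = unifCube d n Set.univ := (unifCube_univ d n).symm
      _ ≤ unifCube d n ({x | ((sparseCount d m n x : ℝ)) ≤ y}
            ∪ {x | L ≤ sparseCount d m n x}) := by
          refine measure_mono ?_
          intro x _
          by_cases hx : ((sparseCount d m n x : ℝ)) ≤ y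
          · exact Or.inl hx
          · refine Or.inr ?_
            have h1 : y < (sparseCount d m n x : ℝ) := lt_of_not_ge hx
            have h2 : ⌊y⌋₊ < sparseCount d m n x := (Nat.floor_lt hy0).mpr h1
            exact h2
      _ ≤ unifCube d n {x | ((sparseCount d m n x : ℝ)) ≤ y}
            + unifCube d n {x | L ≤ sparseCount d m n x} := measure_union_le _ _
      _ ≤ unifCube d n {x | ((sparseCount d m n x : ℝ)) ≤ y} + ENNReal.ofReal (g n) := by
          exact add_le_add_right hcompb _
  -- tendsto of g to 0
  have hg0 : Tendsto g atTop (nhds 0) := by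
    have hε : 0 < Real.exp (-κ/2) := Real.exp_pos _
    set u : ℝ := ((1:ℝ)/2) ^ (Real.exp (-κ/2)) with hu
    have hu0 : 0 ≤ u := by rw [hu]; positivity
    have hu1 : u < 1 := by
      rw [hu]
      exact Real.rpow_lt_one (by norm_num) (by norm_num) hε
    have hbound : ∀ n : ℕ, g n ≤ ((n:ℝ)*(R':ℝ)+1) * u^n := by
      intro n
      rw [hg]
      refine mul_le_mul_of_nonneg_left ?_ (by positivity)
      have h1 : Real.exp (-κ/2) * n ≤ (FL n : ℝ) := by
        rw [hFL]
        push_cast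
        linarith [Nat.lt_floor_add_one (Real.exp (-κ/2) * n)]
      calc ((1:ℝ)/2)^(FL n) = ((1:ℝ)/2) ^ ((FL n : ℕ):ℝ) := by
            rw [Real.rpow_natCast]
        _ ≤ ((1:ℝ)/2) ^ (Real.exp (-κ/2) * n) :=
            Real.rpow_le_rpow_of_exponent_ge (by norm_num) (by norm_num) h1
        _ = u^n := by
            rw [hu, ← Real.rpow_natCast (((1:ℝ)/2) ^ (Real.exp (-κ/2))) n,
              ← Real.rpow_mul (by norm_num)]
    have hmain : Tendsto (fun n : ℕ => ((n:ℝ)*(R':ℝ)+1) * u^n) atTop (nhds 0) := by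
      have h1 : Tendsto (fun n : ℕ => (n:ℝ) * u^n) atTop (nhds 0) :=
        tendsto_self_mul_const_pow_of_lt_one hu0 hu1
      have h2 : Tendsto (fun n : ℕ => u^n) atTop (nhds 0) :=
        tendsto_pow_atTop_nhds_zero_of_lt_one hu0 hu1
      have h3 : Tendsto (fun n : ℕ => (n:ℝ)*u^n*(R':ℝ) + u^n) atTop (nhds 0) := by
        have := (h1.mul_const (R':ℝ)).add h2
        simpa using this
      refine h3.congr fun n => by ring
    have hgnonneg : ∀ n, 0 ≤ g n := by
      intro n
      rw [hg]
      positivity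
    refine tendsto_of_tendsto_of_tendsto_of_le_of_le tendsto_const_nhds hmain hgnonneg hbound
  -- final squeeze
  have hofg : Tendsto (fun n => ENNReal.ofReal (g n)) atTop (nhds 0) := by
    have := ENNReal.tendsto_ofReal (a := 0) hg0
    simpa using this
  have hlow : Tendsto (fun n => 1 - ENNReal.ofReal (g n)) atTop (nhds 1) := by
    have := ENNReal.Tendsto.sub (tendsto_const_nhds (x := (1:ENNReal)))
      hofg (Or.inl ENNReal.one_ne_top)
    simpa using this
  refine tendsto_of_tendsto_of_tendsto_of_le_of_le' hlow tendsto_const_nhds key ?_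
  refine Eventually.of_forall fun n => ?_
  calc unifCube d n _ ≤ unifCube d n Set.univ := measure_mono (Set.subset_univ _)
    _ = 1 := unifCube_univ d n
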